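/- Let k be a field, let n ≥ 1 and ν ≥ 1 be integers, and let N be a nilpotent n × n matrix over k such that for every integer i ≥ 0 the rank of N^i equals max(n − i·ν, 0). Let ℓ ≥ 1 and 1 ≤ a ≤ ν be the unique integers with n = (ℓ − 1)·ν + a. Then N is similar over k to the block-diagonal matrix consisting of a Jordan blocks J_ℓ(0) of size ℓ and (ν − a) Jordan blocks J_{ℓ−1}(0) of size ℓ − 1 (all with eigenvalue 0); that is, there exists an invertible n × n matrix P over k with P·N·P⁻¹ equal to that block-diagonal matrix. (Note a·ℓ + (ν − a)·(ℓ − 1) = n, and if ℓ = 1 the blocks of size 0 are omitted.) -/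

import Mathlib

/-- The `n × n` upper-triangular Jordan block with eigenvalue `lam`. -/
def jordanBlock (k : Type*) [Zero k] [One k] (n : ℕ) (lam : k) :
    Matrix (Fin n) (Fin n) k :=
  Matrix.of fun i j => if (j : ℕ) = (i : ℕ) then lam
    else if (j : ℕ) = (i : ℕ) + 1 then 1 else 0

open Module LinearMap Matrix

theorem aux_g {k V : Type*} [Field k] [AddCommGroup V] [Module k V] [FiniteDimensional k V]
    (R1 K : Submodule k V) (hR1K : R1 ≤ K) {a ν : ℕ} (haν : a ≤ ν)
    (hr1 : finrank k R1 = a) (hKrank : finrank k K = ν) :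
    ∃ g : Fin ν → V, LinearIndependent k g ∧ (∀ i, g i ∈ K) ∧
      ∀ i : Fin ν, (i : ℕ) < a → g i ∈ R1 := by
  obtain ⟨C, hCc⟩ := Submodule.exists_isCompl (R1.comap K.subtype)
  have e1 := Submodule.comapSubtypeEquivOfLe hR1K
  have hfr1 : finrank k (R1.comap K.subtype) = a := by rw [e1.finrank_eq, hr1]
  have hfrC : finrank k C = ν - a := by
    have h1 := Submodule.finrank_add_eq_of_isCompl hCc
    rw [hfr1, hKrank] at h1
    omega
  let c : Basis (Fin a) k R1 := finBasisOfFinrankEq k R1 hr1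
  let d : Basis (Fin (ν - a)) k C := finBasisOfFinrankEq k C hfrC
  set vc : Fin a → V := fun i => (c i : V) with hvc
  set vd : Fin (ν - a) → V := fun j => ((d j : K) : V) with hvd
  have hlic : LinearIndependent k vc :=
    c.linearIndependent.map' R1.subtype (Submodule.ker_subtype _)
  have hlid : LinearIndependent k vd :=
    (d.linearIndependent.map' C.subtype (Submodule.ker_subtype _)).map'
      K.subtype (Submodule.ker_subtype _)
  have hspanc : Submodule.span k (Set.range vc) = R1 := by
    have : Set.range vc = R1.subtype '' (Set.range c) := by
      rw [← Set.range_comp]; rfl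
    rw [this, ← Submodule.map_span, c.span_eq, Submodule.map_top, Submodule.range_subtype]
  have hspand : Submodule.span k (Set.range vd) = C.map K.subtype := by
    have : Set.range vd = K.subtype '' (C.subtype '' (Set.range d)) := by
      rw [← Set.range_comp, ← Set.range_comp]; rfl
    rw [this, ← Submodule.map_span, ← Submodule.map_span, d.span_eq,
      Submodule.map_top, Submodule.range_subtype]
  have hdisj : Disjoint (Submodule.span k (Set.range vc))
      (Submodule.span k (Set.range vd)) := by
    rw [hspanc, hspand, disjoint_iff]
    have h1 := hCc.disjoint
    rw [disjoint_iff] at h1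
    have h2 : R1 = (R1.comap K.subtype).map K.subtype := by
      rw [Submodule.map_comap_subtype, inf_eq_right.mpr hR1K]
    rw [h2, ← Submodule.map_inf _ (Submodule.injective_subtype K), h1,
      Submodule.map_bot]
  have hsumli : LinearIndependent k (Sum.elim vc vd) :=
    hlic.sum_type hlid hdisj
  set E : (Fin a ⊕ Fin (ν - a)) ≃ Fin ν :=
    finSumFinEquiv.trans (finCongr (by omega)) with hE
  refine ⟨fun i => if h : (i : ℕ) < a then vc ⟨(i : ℕ), h⟩
    else vd ⟨(i : ℕ) - a, by omega⟩, ?_, ?_, ?_⟩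
  · rw [← linearIndependent_equiv E]
    have heq : (fun i : Fin ν => if h : (i : ℕ) < a then vc ⟨(i : ℕ), h⟩
        else vd ⟨(i : ℕ) - a, by omega⟩) ∘ E = Sum.elim vc vd := by
      funext x
      rcases x with i | j
      · have h1 : ((E (Sum.inl i) : Fin ν) : ℕ) = (i : ℕ) := by
          simp [hE, finSumFinEquiv]
        simp only [Function.comp_apply, Sum.elim_inl]
        rw [dif_pos (show ((E (Sum.inl i) : Fin ν) : ℕ) < a by rw [h1]; exact i.2)]
        congr 1
        all_goals exact Fin.ext h1
      · have h1 : ((E (Sum.inr j) : Fin ν) : ℕ) = a + (j : ℕ) := by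
          simp [hE, finSumFinEquiv]
        have h2 : ¬ ((E (Sum.inr j) : Fin ν) : ℕ) < a := by omega
        simp only [Function.comp_apply, Sum.elim_inr]
        rw [dif_neg h2]
        congr 1
        all_goals exact Fin.ext (by simp only [h1]; omega)
    rw [heq]
    exact hsumli
  · intro i
    by_cases h : (i : ℕ) < a
    · simp only [dif_pos h]
      exact hR1K (c ⟨(i : ℕ), h⟩).2
    · simp only [dif_neg h]
      exact ((d ⟨(i : ℕ) - a, by omega⟩ : K)).2
  · intro i h
    simp only [dif_pos h]
    exact (c ⟨(i : ℕ), h⟩).2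

theorem aux_Krank {k V : Type*} [Field k] [AddCommGroup V] [Module k V] [FiniteDimensional k V]
    (f : V →ₗ[k] V) (m : ℕ) {r1 r2 : ℕ}
    (h1 : finrank k (LinearMap.range (f ^ (m + 1))) = r1)
    (h2 : finrank k (LinearMap.range (f ^ m)) = r2) :
    finrank k ((LinearMap.ker f ⊓ LinearMap.range (f ^ m) : Submodule k V)) = r2 - r1 := by
  set φ : (LinearMap.range (f ^ m) : Submodule k V) →ₗ[k] V :=
    f ∘ₗ (LinearMap.range (f ^ m)).subtype with hφ
  have hrangeφ : LinearMap.range φ = LinearMap.range (f ^ (m + 1)) := by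
    rw [hφ, LinearMap.range_comp, Submodule.range_subtype, ← LinearMap.range_comp,
      ← Module.End.mul_eq_comp, ← pow_succ']
  have hkerφ : LinearMap.ker φ = (LinearMap.ker f).comap
      (LinearMap.range (f ^ m)).subtype := by
    rw [hφ, LinearMap.ker_comp]
  have hrn := LinearMap.finrank_range_add_finrank_ker φ
  rw [hrangeφ, h1, h2] at hrn
  have hKeq : finrank k ((LinearMap.ker f ⊓ LinearMap.range (f ^ m) : Submodule k V))
      = finrank k (LinearMap.ker φ) := by
    have e1 := Submodule.equivMapOfInjective
      (LinearMap.range (f ^ m)).subtype (Submodule.injective_subtype _) (LinearMap.ker φ)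
    have h3 : (LinearMap.ker φ).map (LinearMap.range (f ^ m)).subtype
        = LinearMap.ker f ⊓ LinearMap.range (f ^ m) := by
      rw [hkerφ, Submodule.map_comap_subtype, inf_comm]
    rw [← h3]
    exact (LinearEquiv.finrank_eq e1).symm
  omega

set_option maxHeartbeats 4000000 in
set_option synthInstance.maxHeartbeats 1000000 in
/-- Let `N` be a nilpotent `n × n` matrix over a field `k` with
`rank (Nⁱ) = max(n − iν, 0)` for all `i ≥ 0`, and let `ℓ ≥ 1`, `1 ≤ a ≤ ν` be the
unique integers with `n = (ℓ−1)ν + a`.  Then `N` is similar over `k` to the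
block-diagonal matrix consisting of `a` Jordan blocks `J_ℓ(0)` and `ν − a` Jordan
blocks `J_{ℓ−1}(0)` (up to an identification of the index types, realized by an
equivalence `e`). -/
theorem nilpotent_rank_sequence_jordan_form
    (k : Type*) [Field k] (n ν ℓ a : ℕ) (hn : 1 ≤ n) (hν : 1 ≤ ν)
    (hℓ : 1 ≤ ℓ) (ha1 : 1 ≤ a) (haν : a ≤ ν) (hsum : n = (ℓ - 1) * ν + a)
    (N : Matrix (Fin n) (Fin n) k) (hnil : IsNilpotent N)
    (hrank : ∀ i : ℕ, ((N ^ i).rank : ℤ) = max ((n : ℤ) - (i : ℤ) * (ν : ℤ)) 0) :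
    ∃ e : ((i : Fin ν) × Fin (if (i : ℕ) < a then ℓ else ℓ - 1)) ≃ Fin n,
      ∃ P : Matrix (Fin n) (Fin n) k, IsUnit P ∧
        P * N * P⁻¹ =
          (Matrix.reindex e e)
            (Matrix.blockDiagonal'
              (fun i : Fin ν => jordanBlock k (if (i : ℕ) < a then ℓ else ℓ - 1) 0)) := by
  classical
  set len : Fin ν → ℕ := fun i => if (i : ℕ) < a then ℓ else ℓ - 1 with hlen
  -- cardinality of the index type
  have hfiltcard : (Finset.univ.filter (fun i : Fin ν => (i : ℕ) < a)).card = a := by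
    rw [← Fintype.card_subtype]
    exact Fintype.card_congr
      (show {i : Fin ν // (i : ℕ) < a} ≃ Fin a from
        ⟨fun x => ⟨(x.1 : ℕ), x.2⟩, fun j => ⟨⟨(j : ℕ), lt_of_lt_of_le j.2 haν⟩, j.2⟩,
          fun x => by ext; rfl, fun j => by ext; rfl⟩)
      |>.trans (Fintype.card_fin a)
  have hcard : Fintype.card ((i : Fin ν) × Fin (len i)) = n := by
    rw [Fintype.card_sigma]
    have h1 : ∀ i : Fin ν, Fintype.card (Fin (len i)) = (ℓ - 1) + (if (i : ℕ) < a then 1 else 0) := by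
      intro i; simp only [Fintype.card_fin, hlen]; split <;> omega
    rw [Finset.sum_congr rfl (fun i _ => h1 i), Finset.sum_add_distrib,
      Finset.sum_const, ← Finset.card_filter, hfiltcard]
    simp only [Finset.card_univ, Fintype.card_fin, smul_eq_mul]
    rw [hsum, Nat.mul_comm]
  -- rank facts in ℕ
  have hrank' : ∀ i : ℕ, i * ν ≤ n → (N ^ i).rank = n - i * ν := by
    intro i hi
    have := hrank i
    have h2 : ((N ^ i).rank : ℤ) = (n : ℤ) - (i : ℤ) * ν := by
      rw [this, max_eq_left]; omega
    omega
  have hrank0 : ∀ i : ℕ, n ≤ i * ν → (N ^ i).rank = 0 := by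
    intro i hi
    have := hrank i
    have h2 : ((N ^ i).rank : ℤ) = 0 := by rw [this, max_eq_right]; omega
    omega
  -- the linear map
  set f : (Fin n → k) →ₗ[k] (Fin n → k) := N.mulVecLin with hf
  have hpow : ∀ i : ℕ, (N ^ i).mulVecLin = f ^ i := by
    intro i; induction i with
    | zero => simp; rfl
    | succ i ih => rw [pow_succ, Matrix.mulVecLin_mul, ih, pow_succ]; rfl
  have hfrank : ∀ i : ℕ, finrank k (LinearMap.range (f ^ i)) = (N ^ i).rank := by
    intro i; rw [← hpow i]; rfl
  have hmul1 : ℓ * ν = (ℓ - 1) * ν + ν := by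
    have h : ℓ = (ℓ - 1) + 1 := by omega
    nth_rewrite 1 [h]; ring
  have hmul2 : (ℓ - 1) * ν = (ℓ - 2) * ν + ν ∨ ℓ < 2 := by
    rcases Nat.lt_or_ge ℓ 2 with h | h
    · exact Or.inr h
    · left; have h2 : ℓ - 1 = (ℓ - 2) + 1 := by omega
      rw [h2, add_mul, one_mul]
  have hfl : f ^ ℓ = 0 := by
    have h1 : finrank k (LinearMap.range (f ^ ℓ)) = 0 := by
      rw [hfrank, hrank0]; omega
    rw [Submodule.finrank_eq_zero] at h1
    exact LinearMap.range_eq_bot.mp h1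
  rcases Nat.lt_or_ge ℓ 2 with hl1 | hl2
  · -- case ℓ = 1 : N = 0 and the Jordan matrix is 0
    have hf0 : f = 0 := by
      have h1 : ℓ = 1 := by omega
      rw [← pow_one f, ← h1, hfl]
    have hN0 : N = 0 := by
      ext i j
      have h3 : N.mulVec (Pi.single j 1) = 0 := by
        have h4 := congrArg (fun φ : (Fin n → k) →ₗ[k] (Fin n → k) => φ (Pi.single j 1)) hf0
        simpa [hf, Matrix.mulVecLin_apply] using h4
      have h5 := congrFun h3 i
      rw [Matrix.mulVec_single] at h5
      simpa using h5
    have hJ0 : (fun i : Fin ν => jordanBlock k (len i) 0) = 0 := by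
      funext i
      ext si tj
      have h1 : len i ≤ 1 := by simp only [hlen]; split <;> omega
      have h2 : (tj : ℕ) = (si : ℕ) := by
        have := si.2
        have := tj.2
        omega
      simp [jordanBlock, h2]
    refine ⟨Fintype.equivFinOfCardEq hcard, 1, isUnit_one, ?_⟩
    rw [hN0, hJ0, Matrix.blockDiagonal'_zero]
    simp
  -- main case : ℓ ≥ 2
  have hNzero : True := trivial
  -- dimensions
  have hr1 : finrank k (LinearMap.range (f ^ (ℓ - 1))) = a := by
    rw [hfrank, hrank' (ℓ - 1) (by omega)]; omega
  have hr2 : finrank k (LinearMap.range (f ^ (ℓ - 2))) = ν + a := by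
    rw [hfrank, hrank' (ℓ - 2) (by omega)]; omega
  set R1 : Submodule k (Fin n → k) := LinearMap.range (f ^ (ℓ - 1)) with hR1
  set K : Submodule k (Fin n → k) := LinearMap.ker f ⊓ LinearMap.range (f ^ (ℓ - 2)) with hK
  have hR1K : R1 ≤ K := by
    rintro x ⟨y, rfl⟩
    refine Submodule.mem_inf.mpr ⟨?_, ⟨f y, ?_⟩⟩
    · rw [LinearMap.mem_ker, ← Module.End.mul_apply, ← pow_succ']
      have h1 : ℓ - 1 + 1 = ℓ := by omega
      rw [h1, hfl, LinearMap.zero_apply]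
    · have h2 : ℓ - 2 + 1 = ℓ - 1 := by omega
      rw [← Module.End.mul_apply, ← pow_succ, h2]
  have hKrank : finrank k K = ν := by
    have he : ℓ - 2 + 1 = ℓ - 1 := by omega
    have h1 : finrank k (LinearMap.range (f ^ (ℓ - 2 + 1))) = a := by rw [he]; exact hr1
    have := aux_Krank f (ℓ - 2) h1 hr2
    rw [hK, this]
    omega
  -- construct the independent family g of kernel vectors
  obtain ⟨g, hgli, hgK, hgR1⟩ :
      ∃ g : Fin ν → (Fin n → k), LinearIndependent k g ∧ (∀ i, g i ∈ K) ∧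
        (∀ i : Fin ν, (i : ℕ) < a → g i ∈ R1) :=
    aux_g R1 K hR1K haν hr1 hKrank
  -- tops of chains
  set len' : Fin ν → ℕ := fun i => if (i : ℕ) < a then ℓ - 1 else ℓ - 2 with hlen'
  have hlen_eq : ∀ i, len i = len' i + 1 := by
    intro i; simp only [hlen, hlen']; split <;> omega
  have hg_mem : ∀ i, g i ∈ LinearMap.range (f ^ (len' i)) := by
    intro i
    by_cases h : (i : ℕ) < a
    · simpa only [hlen', h, if_true] using hgR1 i h
    · simpa only [hlen', h, if_false] using ((Submodule.mem_inf.mp (hgK i)).2)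
  set top : Fin ν → (Fin n → k) := fun i => (hg_mem i).choose with htopdef
  have htop : ∀ i, (f ^ (len' i)) (top i) = g i := fun i => (hg_mem i).choose_spec
  have hgker : ∀ i, f (g i) = 0 := fun i => (hgK i).1
  have htop0 : ∀ i m, len i ≤ m → (f ^ m) (top i) = 0 := by
    intro i m hm
    have h1 : (f ^ (len i)) (top i) = 0 := by
      rw [hlen_eq i, pow_succ', Module.End.mul_apply, htop, hgker]
    have h2 : m = (m - len i) + len i := by omega
    rw [h2, pow_add, Module.End.mul_apply, h1, map_zero]
  -- the chain family
  set b : ((i : Fin ν) × Fin (len i)) → (Fin n → k) :=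
    fun y => (f ^ (len' y.1 - (y.2 : ℕ))) (top y.1) with hb
  have hC : ∀ (i : Fin ν) (t : ℕ), t ≤ len' i → ∀ s : ℕ,
      (f ^ s) ((f ^ (len' i - t)) (top i)) =
        if s ≤ t then (f ^ (len' i - (t - s))) (top i) else 0 := by
    intro i t ht s
    rw [← Module.End.mul_apply, ← pow_add]
    split_ifs with hst
    · have he : s + (len' i - t) = len' i - (t - s) := by omega
      rw [he]
    · refine htop0 i _ ?_
      rw [hlen_eq i]
      omega
  have hb0 : ∀ (i : Fin ν) (t : Fin (len i)), (t : ℕ) = 0 → b ⟨i, t⟩ = g i := by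
    intro i t ht; simp only [hb, ht, Nat.sub_zero, htop]
  have hble : ∀ (i : Fin ν) (t : Fin (len i)), (t : ℕ) ≤ len' i :=
    fun i t => by have h1 := t.2; have h2 := hlen_eq i; omega
  -- linear independence of the chain family
  have hbli : LinearIndependent k b := by
    rw [Fintype.linearIndependent_iff]
    intro co hco
    have claim : ∀ m : ℕ, ∀ y : ((i : Fin ν) × Fin (len i)), ℓ - m ≤ (y.2 : ℕ) → co y = 0 := by
      intro m
      induction m with
      | zero =>
        intro y hy
        exfalso
        have h1 := y.2.2
        have h2 : len y.1 ≤ ℓ := by simp only [hlen]; split <;> omega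
        omega
      | succ m ih =>
        intro y hy
        obtain ⟨i0, t0⟩ := y
        simp only at hy
        rcases Nat.lt_or_ge (ℓ - (m + 1)) (ℓ - m) with hlt | hge
        swap
        · exact ih ⟨i0, t0⟩ (by simp only; omega)
        set s := ℓ - (m + 1) with hs
        have hs1 : s + 1 = ℓ - m := by omega
        rcases Nat.lt_or_ge (t0 : ℕ) (s + 1) with hylt | hyge
        swap
        · exact ih ⟨i0, t0⟩ (by simp only; omega)
        have hys : (t0 : ℕ) = s := by omega
        -- apply f^s to the relation
        have h0 : (0 : Fin n → k) = ∑ z : ((i : Fin ν) × Fin (len i)), co z • (f ^ s) (b z) := by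
          have : (f ^ s) (∑ z : ((i : Fin ν) × Fin (len i)), co z • b z) = 0 := by
            rw [hco, map_zero]
          rw [map_sum] at this
          simp only [_root_.map_smul] at this
          exact this.symm
        have hinner : ∀ i : Fin ν, (∑ t' : Fin (len i), co ⟨i, t'⟩ • (f ^ s) (b ⟨i, t'⟩))
            = (if h : s < len i then co ⟨i, ⟨s, h⟩⟩ else 0) • g i := by
          intro i
          have hterm : ∀ t' : Fin (len i), co ⟨i, t'⟩ • (f ^ s) (b ⟨i, t'⟩)
              = if (t' : ℕ) = s then co ⟨i, t'⟩ • g i else 0 := by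
            intro t'
            rcases Nat.lt_trichotomy (t' : ℕ) s with h | h | h
            · rw [if_neg (by omega)]
              have hCc := hC i (t' : ℕ) (hble i t') s
              rw [if_neg (by omega)] at hCc
              simp only [hb]
              rw [hCc, smul_zero]
            · rw [if_pos h]
              have hCc := hC i (t' : ℕ) (hble i t') s
              rw [if_pos (by omega)] at hCc
              simp only [hb]
              rw [hCc]
              have he : len' i - ((t' : ℕ) - s) = len' i := by omega
              rw [he, htop]
            · rw [if_neg (by omega)]
              have hz : co ⟨i, t'⟩ = 0 := ih ⟨i, t'⟩ (by simp only; omega)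
              rw [hz, zero_smul]
          rw [Finset.sum_congr rfl (fun t' _ => hterm t')]
          by_cases h : s < len i
          · rw [dif_pos h, Finset.sum_eq_single (⟨s, h⟩ : Fin (len i))]
            · rw [if_pos rfl]
            · intro t' _ hne
              rw [if_neg]
              intro heq
              exact hne (Fin.ext heq)
            · intro habs
              exact absurd (Finset.mem_univ _) habs
          · rw [dif_neg h, Finset.sum_eq_zero, zero_smul]
            intro t' _
            rw [if_neg]
            have := t'.2
            omega
        have h2 : (∑ i : Fin ν, (if h : s < len i then co ⟨i, ⟨s, h⟩⟩ else 0) • g i) = 0 := by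
          rw [← Finset.sum_congr rfl (fun i _ => hinner i)]
          have h0' := h0
          rw [← Finset.univ_sigma_univ, Finset.sum_sigma] at h0'
          exact h0'.symm
        have h3 := Fintype.linearIndependent_iff.mp hgli
          (fun i => if h : s < len i then co ⟨i, ⟨s, h⟩⟩ else 0) h2 i0
        have hsl : s < len i0 := by have := t0.2; omega
        rw [dif_pos hsl] at h3
        have ht0 : t0 = ⟨s, hsl⟩ := Fin.ext hys
        rw [ht0]
        exact h3
    intro y
    exact claim ℓ y (by omega)
  -- Jordan block entries of the target matrix
  have hD : ∀ (i : Fin ν) (si : Fin (len i)) (j : Fin ν) (tj : Fin (len j)),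
      (Matrix.blockDiagonal' (fun i : Fin ν => jordanBlock k (len i) 0)) ⟨i, si⟩ ⟨j, tj⟩ =
        if i = j ∧ (tj : ℕ) = (si : ℕ) + 1 then 1 else 0 := by
    intro i si j tj
    rw [Matrix.blockDiagonal'_apply]
    by_cases h : i = j
    · subst h
      rw [dif_pos rfl]
      have hiff : (i = i ∧ (tj : ℕ) = (si : ℕ) + 1) ↔ ((tj : ℕ) = (si : ℕ) + 1) := by
        simp
      rw [if_congr hiff rfl rfl, cast_eq]
      simp only [jordanBlock, Matrix.of_apply]
      split_ifs <;> first | rfl | omega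
    · rw [dif_neg h, if_neg]
      rintro ⟨h1, -⟩
      exact h h1
  -- action of f on chain vectors
  have hfb : ∀ (j : Fin ν) (t : Fin (len j)), (f ^ 1) (b ⟨j, t⟩) =
      if ht : 1 ≤ (t : ℕ) then b ⟨j, ⟨(t : ℕ) - 1, by omega⟩⟩ else 0 := by
    intro j t
    have hCc := hC j (t : ℕ) (hble j t) 1
    simp only [hb]
    rw [hCc]
    split_ifs with ht
    · rfl
    · rfl
  -- the basis of chain vectors
  have hfinrank : finrank k (Fin n → k) = n := by
    rw [Module.finrank_pi]
    exact Fintype.card_fin n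
  have hne : Nonempty ((i : Fin ν) × Fin (len i)) := by
    rw [← Fintype.card_pos_iff, hcard]
    omega
  let B : Basis ((i : Fin ν) × Fin (len i)) k (Fin n → k) :=
    basisOfLinearIndependentOfCardEqFinrank hbli (by rw [hcard, hfinrank])
  have hB : ∀ y, B y = b y := fun y => by
    rw [coe_basisOfLinearIndependentOfCardEqFinrank]
  let e : ((i : Fin ν) × Fin (len i)) ≃ Fin n := Fintype.equivFinOfCardEq hcard
  refine ⟨e, ?_⟩
  let B' := B.reindex e
  let Q : Matrix (Fin n) (Fin n) k := (Pi.basisFun k (Fin n)).toMatrix B'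
  have hQ : ∀ r c, Q r c = b (e.symm c) r := by
    intro r c
    rw [show Q r c = (Pi.basisFun k (Fin n)).repr (B' c) r from rfl,
      Pi.basisFun_repr]
    show (B.reindex e) c r = _
    rw [Basis.reindex_apply, hB]
  letI := (Pi.basisFun k (Fin n)).invertibleToMatrix B'
  have hQunit : IsUnit Q := isUnit_of_invertible Q
  have hQdet : IsUnit Q.det := (Matrix.isUnit_iff_isUnit_det Q).mp hQunit
  refine ⟨Q⁻¹, Matrix.isUnit_nonsing_inv_iff.mpr hQunit, ?_⟩
  rw [Matrix.nonsing_inv_nonsing_inv Q hQdet]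
  -- key computation : N * Q = Q * M
  have key : N * Q = Q * ((Matrix.reindex e e)
      (Matrix.blockDiagonal' (fun i : Fin ν => jordanBlock k (len i) 0))) := by
    ext r c
    rw [Matrix.mul_apply, Matrix.mul_apply]
    have hlhs : (∑ x, N r x * Q x c) = (f ^ 1) (b (e.symm c)) r := by
      rw [pow_one]
      have h1 : f (b (e.symm c)) = N.mulVec (b (e.symm c)) := by rw [hf]; rfl
      rw [h1]
      simp only [Matrix.mulVec, dotProduct]
      exact Finset.sum_congr rfl (fun x _ => by rw [hQ])
    rw [hlhs]
    have hrhs : (∑ x, Q r x * (Matrix.reindex e e)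
        (Matrix.blockDiagonal' (fun i : Fin ν => jordanBlock k (len i) 0)) x c)
        = ∑ y : ((i : Fin ν) × Fin (len i)), b y r *
            (Matrix.blockDiagonal' (fun i : Fin ν => jordanBlock k (len i) 0)) y (e.symm c) := by
      rw [← Equiv.sum_comp e.symm (fun y => b y r *
        (Matrix.blockDiagonal' (fun i : Fin ν => jordanBlock k (len i) 0)) y (e.symm c))]
      refine Finset.sum_congr rfl (fun x _ => ?_)
      rw [hQ, Matrix.reindex_apply, Matrix.submatrix_apply]
    rw [hrhs]
    generalize e.symm c = z
    obtain ⟨j, t⟩ := z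
    by_cases h0 : 1 ≤ (t : ℕ)
    · rw [hfb j t, dif_pos h0]
      refine Eq.trans ?_ (Finset.sum_eq_single
          (⟨j, ⟨(t : ℕ) - 1, by omega⟩⟩ : (i : Fin ν) × Fin (len i)) ?_ ?_).symm
      · rw [hD, if_pos ⟨rfl, show (t : ℕ) = (t : ℕ) - 1 + 1 by omega⟩, mul_one]
      · rintro ⟨iy, sy⟩ - hne
        rw [hD, if_neg, mul_zero]
        rintro ⟨h1, h2⟩
        subst h1
        exact hne (congrArg (Sigma.mk iy) (Fin.ext (show (sy : ℕ) = (t : ℕ) - 1 by omega)))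
      · intro habs
        exact absurd (Finset.mem_univ _) habs
    · rw [hfb j t, dif_neg h0, Pi.zero_apply]
      symm
      refine Finset.sum_eq_zero ?_
      rintro ⟨iy, sy⟩ -
      rw [hD, if_neg, mul_zero]
      rintro ⟨-, h2⟩
      omega
  calc Q⁻¹ * N * Q = Q⁻¹ * (N * Q) := by rw [Matrix.mul_assoc]
    _ = Q⁻¹ * (Q * ((Matrix.reindex e e)
        (Matrix.blockDiagonal' (fun i : Fin ν => jordanBlock k (len i) 0)))) := by rw [key]
    _ = (Q⁻¹ * Q) * ((Matrix.reindex e e)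
        (Matrix.blockDiagonal' (fun i : Fin ν => jordanBlock k (len i) 0))) := by
        rw [Matrix.mul_assoc]
    _ = _ := by rw [Matrix.nonsing_inv_mul Q hQdet, Matrix.one_mul]
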